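/- Let δ > 0, C₁₁₁₁ ∈ ℝ, and set m := ∫_{B_δ(0)⊂ℝ³} ‖ξ‖² dξ = (4/5)πδ⁵. Define the isotropic three-dimensional micromodulus λ(ξ) := (10 C₁₁₁₁ / m) · (1/‖ξ‖²) for 0 < ‖ξ‖ < δ (corresponding to influence function ω ≡ 1). Then for every (ξ₁,ξ₂) with 0 < r := √(ξ₁²+ξ₂²) < δ, the plane strain micromodulus functions λ_n(ξ₁,ξ₂) := ∫_{−√(δ²−r²)}^{√(δ²−r²)} λ(ξ₁,ξ₂,ξ₃) ξ₃ⁿ dξ₃ satisfy: λ₀(ξ₁,ξ₂) = (25 C₁₁₁₁ / (π δ⁵ r)) · arctan(√(δ²/r² − 1)); λ₁(ξ₁,ξ₂) = 0; and λ₂(ξ₁,ξ₂) = (25 C₁₁₁₁ / (π δ⁴)) · ( √(1 − r²/δ²) − (r/δ) · arctan(√(δ²/r² − 1)) ). -/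

import Mathlib

open MeasureTheory Real

lemma ball_int (δ : ℝ) (hδ : 0 < δ) :
    (∫ ξ in Metric.ball (0 : EuclideanSpace ℝ (Fin 3)) δ, ‖ξ‖^2)
        = (4/5) * π * δ^5 := by
  have h1 : (∫ ξ in Metric.ball (0 : EuclideanSpace ℝ (Fin 3)) δ, ‖ξ‖^2)
      = ∫ ξ : EuclideanSpace ℝ (Fin 3), (Set.indicator (Set.Iio δ) fun y : ℝ => y^2) ‖ξ‖ := by
    rw [← integral_indicator measurableSet_ball]
    congr 1
    ext ξ
    by_cases h : ξ ∈ Metric.ball (0 : EuclideanSpace ℝ (Fin 3)) δ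
    · rw [Set.indicator_of_mem h, Set.indicator_of_mem]
      simpa [Metric.mem_ball, dist_zero_right] using h
    · rw [Set.indicator_of_notMem h, Set.indicator_of_notMem]
      simpa [Metric.mem_ball, dist_zero_right] using h
  rw [h1, integral_fun_norm_addHaar volume (Set.indicator (Set.Iio δ) fun y : ℝ => y^2)]
  have hdim : Module.finrank ℝ (EuclideanSpace ℝ (Fin 3)) = 3 := by
    simp [finrank_euclideanSpace]
  rw [hdim]
  have hvol : (volume (Metric.ball (0 : EuclideanSpace ℝ (Fin 3)) 1)).toReal = (4/3) * π := by
    rw [EuclideanSpace.volume_ball]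
    have hG : Real.Gamma ((Fintype.card (Fin 3) : ℝ) / 2 + 1) = (3/4) * Real.sqrt π := by
      have : (Fintype.card (Fin 3) : ℝ) / 2 + 1 = (1/2 + 1) + 1 := by
        simp [Fintype.card_fin]; norm_num
      rw [this, Real.Gamma_add_one (by norm_num), Real.Gamma_add_one (by norm_num),
        Real.Gamma_one_half_eq]
      ring
    rw [hG]
    have h3 : Real.sqrt π ^ Fintype.card (Fin 3) / ((3/4) * Real.sqrt π)
        = (4/3) * π := by
      have hcub : Real.sqrt π ^ Fintype.card (Fin 3) = π * Real.sqrt π := by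
        simp only [Fintype.card_fin]
        rw [pow_succ, Real.sq_sqrt Real.pi_pos.le]
      rw [hcub]
      have hπ : Real.sqrt π ≠ 0 := (Real.sqrt_pos.mpr Real.pi_pos).ne'
      field_simp
    rw [h3]
    simp [ENNReal.toReal_mul, ENNReal.toReal_pow, ENNReal.toReal_ofReal,
      (by positivity : (0:ℝ) ≤ (4/3) * π)]
  rw [measureReal_def, hvol]
  have h2 : (∫ y in Set.Ioi (0:ℝ), y ^ (3 - 1) • (Set.indicator (Set.Iio δ) fun y : ℝ => y^2) y)
      = ∫ y in Set.Ioo (0:ℝ) δ, y^4 := by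
    have : ∀ y : ℝ, y ^ (3-1) • (Set.indicator (Set.Iio δ) fun y : ℝ => y^2) y
        = Set.indicator (Set.Iio δ) (fun y : ℝ => y^4) y := by
      intro y
      by_cases h : y ∈ Set.Iio δ
      · rw [Set.indicator_of_mem h, Set.indicator_of_mem h]
        simp only [smul_eq_mul]; ring
      · rw [Set.indicator_of_notMem h, Set.indicator_of_notMem h]
        simp
    simp_rw [this]
    rw [setIntegral_indicator measurableSet_Iio, Set.Ioi_inter_Iio]
  rw [h2]
  have h4 : (∫ y in Set.Ioo (0:ℝ) δ, y^4) = δ^5/5 := by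
    rw [← integral_Ioc_eq_integral_Ioo, ← intervalIntegral.integral_of_le hδ.le,
      integral_pow]
    norm_num
  rw [h4]
  simp only [smul_eq_mul, nsmul_eq_mul]
  push_cast
  ring

lemma key_int (r s : ℝ) (hr0 : 0 < r) :
    (∫ t in (-s)..s, 1 / (r^2 + t^2)) = (2/r) * Real.arctan (s/r) := by
  have hr : r ≠ 0 := hr0.ne'
  have h1 : ∀ t : ℝ, 1 / (r^2 + t^2) = (1/r^2) * (1 / (1 + (t/r)^2)) := by
    intro t
    rw [div_pow]
    field_simp
  simp_rw [h1]
  rw [intervalIntegral.integral_const_mul,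
    intervalIntegral.integral_comp_div (f := fun u : ℝ => 1 / (1 + u^2)) hr,
    integral_one_div_one_add_sq]
  rw [neg_div, Real.arctan_neg]
  field_simp
  ring

theorem statement19 (δ : ℝ) (hδ : 0 < δ) (C1111 : ℝ) (ξ₁ ξ₂ : ℝ)
    (r : ℝ) (hr : r = Real.sqrt (ξ₁^2 + ξ₂^2)) (hr0 : 0 < r) (hrδ : r < δ) :
    -- the weighted volume
    (∫ ξ in Metric.ball (0 : EuclideanSpace ℝ (Fin 3)) δ, ‖ξ‖^2)
        = (4/5) * π * δ^5 ∧
    -- λ₀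
    (∫ t in (-(Real.sqrt (δ^2 - r^2)))..(Real.sqrt (δ^2 - r^2)),
        (10 * C1111 / ((4/5) * π * δ^5)) * (1 / (ξ₁^2 + ξ₂^2 + t^2)))
      = (25 * C1111 / (π * δ^5 * r)) * Real.arctan (Real.sqrt (δ^2/r^2 - 1)) ∧
    -- λ₁
    (∫ t in (-(Real.sqrt (δ^2 - r^2)))..(Real.sqrt (δ^2 - r^2)),
        (10 * C1111 / ((4/5) * π * δ^5)) * (1 / (ξ₁^2 + ξ₂^2 + t^2)) * t)
      = 0 ∧
    -- λ₂
    (∫ t in (-(Real.sqrt (δ^2 - r^2)))..(Real.sqrt (δ^2 - r^2)),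
        (10 * C1111 / ((4/5) * π * δ^5)) * (1 / (ξ₁^2 + ξ₂^2 + t^2)) * t^2)
      = (25 * C1111 / (π * δ^4)) *
          (Real.sqrt (1 - r^2/δ^2) - (r/δ) * Real.arctan (Real.sqrt (δ^2/r^2 - 1))) := by
  have hπ : π ≠ 0 := Real.pi_ne_zero
  have hδ' : δ ≠ 0 := hδ.ne'
  have hr' : r ≠ 0 := hr0.ne'
  have hξ : ξ₁^2 + ξ₂^2 = r^2 := by
    rw [hr, Real.sq_sqrt (by positivity)]
  set s : ℝ := Real.sqrt (δ^2 - r^2) with hs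
  have hs2 : s^2 = δ^2 - r^2 := Real.sq_sqrt (by nlinarith)
  have hs0 : 0 < s := Real.sqrt_pos.mpr (by nlinarith)
  have harg : Real.sqrt (δ^2/r^2 - 1) = s/r := by
    have h1 : δ^2/r^2 - 1 = (δ^2 - r^2)/r^2 := by field_simp
    rw [h1, Real.sqrt_div (by nlinarith : (0:ℝ) ≤ δ^2 - r^2), Real.sqrt_sq hr0.le]
  have harg2 : Real.sqrt (1 - r^2/δ^2) = s/δ := by
    have h1 : 1 - r^2/δ^2 = (δ^2 - r^2)/δ^2 := by field_simp
    rw [h1, Real.sqrt_div (by nlinarith : (0:ℝ) ≤ δ^2 - r^2), Real.sqrt_sq hδ.le]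
  -- rewrite kernel
  have hker : ∀ t : ℝ, ξ₁^2 + ξ₂^2 + t^2 = r^2 + t^2 := fun t => by rw [hξ]
  set C : ℝ := 10 * C1111 / ((4/5) * π * δ^5) with hC
  refine ⟨ball_int δ hδ, ?_, ?_, ?_⟩
  · simp_rw [hker]
    rw [intervalIntegral.integral_const_mul, key_int r s hr0, harg]
    rw [hC]
    field_simp
    ring
  · -- odd integrand
    have hodd := intervalIntegral.integral_comp_neg (a := -s) (b := s)
      (f := fun t : ℝ => C * (1 / (ξ₁^2 + ξ₂^2 + t^2)) * t)
    simp only [neg_neg] at hodd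
    have heq : ∀ x : ℝ, C * (1 / (ξ₁^2 + ξ₂^2 + (-x)^2)) * (-x)
        = -(C * (1 / (ξ₁^2 + ξ₂^2 + x^2)) * x) := by intro x; ring_nf
    simp_rw [heq] at hodd
    rw [intervalIntegral.integral_neg] at hodd
    linarith [hodd]
  · simp_rw [hker]
    have hcont : Continuous fun t : ℝ => C * (r^2 / (r^2 + t^2)) := by
      apply Continuous.mul continuous_const
      apply Continuous.div continuous_const (continuous_const.add (continuous_pow 2))
      intro t; show r^2 + t^2 ≠ 0; positivity
    have hsplit : ∀ t : ℝ, C * (1 / (r^2 + t^2)) * t^2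
        = C - C * (r^2 / (r^2 + t^2)) := by
      intro t
      have h : r^2 + t^2 ≠ 0 := by positivity
      field_simp
      ring
    simp_rw [hsplit]
    rw [intervalIntegral.integral_sub (intervalIntegrable_const)
      (hcont.intervalIntegrable _ _)]
    have h2 : (∫ t in (-s)..s, C * (r^2 / (r^2 + t^2)))
        = C * r^2 * ((2/r) * Real.arctan (s/r)) := by
      have : ∀ t : ℝ, C * (r^2 / (r^2 + t^2)) = (C * r^2) * (1 / (r^2 + t^2)) := by
        intro t; ring
      simp_rw [this]
      rw [intervalIntegral.integral_const_mul, key_int r s hr0]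
    rw [h2, intervalIntegral.integral_const, harg, harg2]
    simp only [smul_eq_mul]
    rw [hC]
    field_simp
    ring
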